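/- Fix integers m, n ≥ 1 and positive reals w_1,…,w_{m+n} with w_1 + ⋯ + w_m = w_{m+1} + ⋯ + w_{m+n}. Then there exist constants c_1, c_2, c_3 > 0 such that for all reals t' , t with 0 < t' < t there exists s̄ = (s_1,…,s_{m+n}) ∈ S^+ satisfying: (i) ⌊s̄⌋ ≥ c_1 (t − t'); (ii) min over 1 ≤ i ≤ m+n of (s_i − w_i t') ≥ c_2 (t − t'); (iii) s̄_t − s̄ = (z/m,…,z/m, z/n,…,z/n) (z/m in the first m coordinates and z/n in the last n coordinates) for some real z ≥ c_3 · min(t', t − t'). -/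

import Mathlib

noncomputable section

lemma card_filter_lt (m n : ℕ) :
    (Finset.univ.filter (fun i : Fin (m + n) => (i : ℕ) < m)).card = m := by
  have : Finset.univ.filter (fun i : Fin (m + n) => (i : ℕ) < m) =
      Finset.map (Fin.castAddEmb n) Finset.univ := by
    ext i
    simp only [Finset.mem_filter, Finset.mem_univ, true_and, Finset.mem_map]
    constructor
    · intro h
      exact ⟨⟨i, h⟩, by ext; simp [Fin.castAddEmb]⟩
    · rintro ⟨j, rfl⟩
      exact j.isLt
  rw [this, Finset.card_map, Finset.card_univ, Fintype.card_fin]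

lemma card_filter_not_lt (m n : ℕ) :
    (Finset.univ.filter (fun i : Fin (m + n) => ¬ (i : ℕ) < m)).card = n := by
  have h := Finset.card_filter_add_card_filter_not
    (s := (Finset.univ : Finset (Fin (m + n)))) (p := fun i : Fin (m + n) => (i : ℕ) < m)
  rw [card_filter_lt, Finset.card_univ, Fintype.card_fin] at h
  omega

theorem exists_intermediate_cone_point
    (m n : ℕ) (hm : 1 ≤ m) (hn : 1 ≤ n)
    (w : Fin (m + n) → ℝ) (hw : ∀ i, 0 < w i)
    (hbal : ∑ i ∈ Finset.univ.filter (fun i : Fin (m + n) => (i : ℕ) < m), w i =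
            ∑ i ∈ Finset.univ.filter (fun i : Fin (m + n) => ¬ (i : ℕ) < m), w i) :
    ∃ c₁ c₂ c₃ : ℝ, 0 < c₁ ∧ 0 < c₂ ∧ 0 < c₃ ∧
      ∀ t' t : ℝ, 0 < t' → t' < t →
        ∃ s : Fin (m + n) → ℝ,
          -- s̄ ∈ S⁺
          (∀ i, 0 < s i) ∧
          (∑ i ∈ Finset.univ.filter (fun i : Fin (m + n) => (i : ℕ) < m), s i =
           ∑ i ∈ Finset.univ.filter (fun i : Fin (m + n) => ¬ (i : ℕ) < m), s i) ∧
          -- (i) ⌊s̄⌋ ≥ c₁ (t − t')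
          (∀ i, c₁ * (t - t') ≤ s i) ∧
          -- (ii) ⌊s̄ − s̄_{t'}⌋ ≥ c₂ (t − t')
          (∀ i, c₂ * (t - t') ≤ s i - w i * t') ∧
          -- (iii) s̄_t − s̄ = (z/m,…,z/m,z/n,…,z/n) with z ≥ c₃ min(t', t − t')
          (∃ z : ℝ, c₃ * min t' (t - t') ≤ z ∧
            ∀ i : Fin (m + n),
              w i * t - s i = if (i : ℕ) < m then z / m else z / n) := by
  have hne : Nonempty (Fin (m + n)) := ⟨⟨0, by omega⟩⟩
  set W : ℝ := Finset.univ.inf' (Finset.univ_nonempty) w with hW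
  have hWpos : 0 < W := by
    rw [hW]
    apply (Finset.lt_inf'_iff _).2
    intro i _
    exact hw i
  have hWle : ∀ i, W ≤ w i := fun i => Finset.inf'_le w (Finset.mem_univ i)
  refine ⟨W / 2, W / 2, W / 2, by positivity, by positivity, by positivity, ?_⟩
  intro t' t ht' htt
  have hdt : 0 < t - t' := by linarith
  set z : ℝ := (W / 2) * (t - t') with hz
  have hzpos : 0 < z := by positivity
  refine ⟨fun i => w i * t - (if (i : ℕ) < m then z / m else z / n), ?_, ?_, ?_, ?_, ?_⟩
  · intro i
    have hle : (if (i : ℕ) < m then z / m else z / n) ≤ z := by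
      split <;>
      · rw [div_le_iff₀ (by positivity)]
        nlinarith [Nat.one_le_cast (α := ℝ) |>.2 hm, Nat.one_le_cast (α := ℝ) |>.2 hn]
    have : z ≤ w i * (t - t') := by
      rw [hz]
      have := hWle i
      nlinarith
    nlinarith [hw i, mul_pos (hw i) ht']
  · have h1 : ∑ i ∈ Finset.univ.filter (fun i : Fin (m + n) => (i : ℕ) < m),
        (w i * t - (if (i : ℕ) < m then z / m else z / n)) =
        (∑ i ∈ Finset.univ.filter (fun i : Fin (m + n) => (i : ℕ) < m), w i) * t - z := by
      rw [Finset.sum_sub_distrib, ← Finset.sum_mul]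
      congr 1
      rw [Finset.sum_congr rfl (fun i hi => by
        simp only [Finset.mem_filter] at hi; rw [if_pos hi.2]),
        Finset.sum_const, card_filter_lt]
      rw [nsmul_eq_mul]; field_simp [Nat.cast_ne_zero.2 (show m ≠ 0 by omega)]
    have h2 : ∑ i ∈ Finset.univ.filter (fun i : Fin (m + n) => ¬ (i : ℕ) < m),
        (w i * t - (if (i : ℕ) < m then z / m else z / n)) =
        (∑ i ∈ Finset.univ.filter (fun i : Fin (m + n) => ¬ (i : ℕ) < m), w i) * t - z := by
      rw [Finset.sum_sub_distrib, ← Finset.sum_mul]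
      congr 1
      rw [Finset.sum_congr rfl (fun i hi => by
        simp only [Finset.mem_filter] at hi; rw [if_neg hi.2]),
        Finset.sum_const, card_filter_not_lt]
      rw [nsmul_eq_mul]; field_simp [Nat.cast_ne_zero.2 (show n ≠ 0 by omega)]
    rw [h1, h2, hbal]
  · intro i
    have hle : (if (i : ℕ) < m then z / m else z / n) ≤ z := by
      split <;>
      · rw [div_le_iff₀ (by positivity)]
        nlinarith [Nat.one_le_cast (α := ℝ) |>.2 hm, Nat.one_le_cast (α := ℝ) |>.2 hn]
    have hwi := hWle i
    have := mul_pos (hw i) ht'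
    nlinarith
  · intro i
    have hle : (if (i : ℕ) < m then z / m else z / n) ≤ z := by
      split <;>
      · rw [div_le_iff₀ (by positivity)]
        nlinarith [Nat.one_le_cast (α := ℝ) |>.2 hm, Nat.one_le_cast (α := ℝ) |>.2 hn]
    have hwi := hWle i
    nlinarith
  · refine ⟨z, ?_, fun i => by ring⟩
    rw [hz]
    have : min t' (t - t') ≤ t - t' := min_le_right _ _
    nlinarith
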